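/- Let T be a k-semigraph in which every element of T^(0) is idempotent, and let Δ = T ⊔ Δ_μ be the associated left-cancellative semimultiplicative set with operators λ_a (a ∈ Δ) on ℓ²(Δ). Let α₁,…,αₙ ∈ T and set p := (λ_{α₁}*λ_{α₁})⋯(λ_{αₙ}*λ_{αₙ}). If p ≠ 0, then: (i) s(αᵢ) = s(α₁) for all i; (ii) the tuple μ_α := (s(α₁),α₁,…,αₙ) belongs to Δ_μ and p δ_{μ_α} = δ_{μ_α}; and (iii) for all y₁,…,y_l ∈ T, if q := (λ_{y₁}*λ_{y₁})⋯(λ_{y_l}*λ_{y_l}) satisfies q ≤ p and q ≠ p (as orthogonal projections), then q δ_{μ_α} = 0. -/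

import Mathlib

/-- A semimultiplicative set: a partially defined associative multiplication,
encoded via `Option`: `mul s t = some u` means "`st` is defined and equals `u`". -/
structure SemimultSet (T : Type*) where
  mul : T → T → Option T
  assoc : ∀ s t u : T,
    (mul s t).bind (fun x => mul x u) = (mul t u).bind (fun y => mul s y)

/-- A `k`-semigraph: a semimultiplicative set with a degree map `d : T → ℕ^k`
satisfying the unique factorisation property. -/
structure Semigraph (k : Type*) (T : Type*) extends SemimultSet T where
  d : T → k → ℕ
  deg_mul : ∀ x y z : T, mul x y = some z → d z = d x + d y
  factor : ∀ (x : T) (n₁ n₂ : k → ℕ), d x = n₁ + n₂ →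
    ∃! p : T × T, mul p.1 p.2 = some x ∧ d p.1 = n₁ ∧ d p.2 = n₂

namespace Semigraph

variable {k T : Type*}

/-- `s ≤ t` iff there is `α` with `αs` defined and `αs = t`. -/
def le (S : Semigraph k T) (s t : T) : Prop := ∃ α : T, S.mul α s = some t

/-- The set `Δ_μ` of tuples `yμ_{α₁,…,αₙ}` (`n ≥ 1`) with `y ≤ αᵢ` for some `i`. -/
def DeltaMu (S : Semigraph k T) : Type _ :=
  { p : T × List T // p.2 ≠ [] ∧ ∃ α ∈ p.2, S.le p.1 α }

/-- `Δ = T ⊔ Δ_μ`. -/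
def Delta (S : Semigraph k T) : Type _ := T ⊕ S.DeltaMu

open scoped Classical in
/-- The partial multiplication on `Δ`: products within `T` as in `T`, and
`x · (yμ_α) = (xy)μ_α` whenever `xy` is defined and `(xy)μ_α ∈ Δ_μ`;
all other products are undefined. -/
noncomputable def deltaMul (S : Semigraph k T) : S.Delta → S.Delta → Option S.Delta
  | Sum.inl x, Sum.inl y => (S.mul x y).map Sum.inl
  | Sum.inl x, Sum.inr ⟨(y, l), hp⟩ =>
      match S.mul x y with
      | some z =>
          if h : ∃ α ∈ l, S.le z α then some (Sum.inr ⟨(z, l), ⟨hp.1, h⟩⟩)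
          else none
      | none => none
  | Sum.inr _, _ => none

/-- The minimal common extension set `T^min(x,y)`. -/
def Tmin (S : Semigraph k T) (x y : T) : Set (T × T) :=
  { p | ∃ z : T, S.mul x p.1 = some z ∧ S.mul y p.2 = some z ∧ S.d z = S.d x ⊔ S.d y }

end Semigraph

/-- The canonical basis vector `δ_t` of `ℓ²(G)`. -/
noncomputable def deltaVec {G : Type*} (t : G) : lp (fun _ : G => ℂ) 2 :=
  haveI := Classical.decEq G
  lp.single 2 t 1

/-- `la` is the family of left translation operators associated to the partial
multiplication `m`: `la s δ_t = δ_{st}` if `st` is defined, and `0` otherwise. -/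
def IsLambdaFam {G : Type*} (m : G → G → Option G)
    (la : G → (lp (fun _ : G => ℂ) 2 →L[ℂ] lp (fun _ : G => ℂ) 2)) : Prop :=
  ∀ s t : G, la s (deltaVec t) = (m s t).elim 0 deltaVec

namespace Semigraph

variable {k T : Type*} (S : Semigraph k T)

theorem le_def (s t : T) : S.le s t ↔ ∃ γ : T, S.mul γ s = some t := Iff.rfl

theorem cancel_T {x y y' z : T} (h : S.mul x y = some z) (h' : S.mul x y' = some z) :
    y = y' := by
  have h1 := S.deg_mul x y z h
  have h2 := S.deg_mul x y' z h'
  have hd : S.d y = S.d y' := by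
    funext i
    have := congrFun (h1.symm.trans h2) i
    simpa using this
  obtain ⟨p, -, hu⟩ := S.factor z (S.d x) (S.d y) h1
  have e1 := hu (x, y) ⟨h, rfl, rfl⟩
  have e2 := hu (x, y') ⟨h', rfl, hd.symm⟩
  exact congrArg Prod.snd (e1.trans e2.symm)

theorem unit_left {e x x' y z : T} (he : S.d e = 0) (hx : S.mul x' e = some x)
    (h : S.mul x y = some z) : S.mul e y = some y := by
  have ha := S.assoc x' e y
  rw [hx] at ha
  simp only [Option.bind_some, h] at ha
  obtain ⟨w, hw, hx'w⟩ := (Option.bind_eq_some_iff.mp ha.symm)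
  have hdx : S.d x = S.d x' := by
    have := S.deg_mul x' e x hx
    simp [he] at this; exact this
  have hdw : S.d w = S.d y := by
    have := S.deg_mul e y w hw
    simp [he] at this; exact this
  obtain ⟨p, -, hu⟩ := S.factor z (S.d x) (S.d y) (S.deg_mul x y z h)
  have e1 := hu (x, y) ⟨h, rfl, rfl⟩
  have e2 := hu (x', w) ⟨hx'w, hdx.symm, hdw⟩
  have : w = y := congrArg Prod.snd (e2.trans e1.symm)
  rwa [this] at hw

theorem unit_unique {e e' y : T} (he : S.d e = 0) (he' : S.d e' = 0)
    (h : S.mul e y = some y) (h' : S.mul e' y = some y) : e = e' := by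
  obtain ⟨p, -, hu⟩ := S.factor y 0 (S.d y) (by simp)
  exact congrArg Prod.fst ((hu (e, y) ⟨h, he, rfl⟩).trans (hu (e', y) ⟨h', he', rfl⟩).symm)

theorem mul_unit_right {e x x' : T} (hee : S.mul e e = some e)
    (hx : S.mul x' e = some x) : S.mul x e = some x := by
  have ha := S.assoc x' e e
  rw [hx, hee] at ha
  simpa [hx] using ha

theorem le_self' (hidem : ∀ e : T, S.d e = 0 → S.mul e e = some e) (t : T) :
    ∃ e : T, S.d e = 0 ∧ S.mul e t = some t := by
  obtain ⟨⟨e, x'⟩, ⟨hex, he, -⟩, -⟩ := S.factor t 0 (S.d t) (by simp)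
  have hee := hidem e he
  have ha := S.assoc e e x'
  rw [hee, hex] at ha
  simp only [Option.bind_some, hex] at ha
  exact ⟨e, he, ha.symm⟩

theorem sub_mul_def {y e z γ am v w : T} (hz : S.mul y e = some z)
    (hγ : S.mul γ z = some am) (hw : S.mul am v = some w)
    (hev : S.mul e v = some v) :
    ∃ u, S.mul y v = some u ∧ S.mul γ u = some w := by
  have ha := S.assoc γ z v
  rw [hγ] at ha
  simp only [Option.bind_some, hw] at ha
  obtain ⟨u, hu, hγu⟩ := (Option.bind_eq_some_iff.mp ha.symm)
  have hb := S.assoc y e v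
  rw [hz, hev] at hb
  simp only [Option.bind_some, hu] at hb
  exact ⟨u, hb.symm, hγu⟩


theorem deltaMul_inl_inr_isSome {x y : T} {l : List T} {hp} :
    (S.deltaMul (Sum.inl x) (Sum.inr ⟨(y, l), hp⟩)).isSome ↔
      ∃ z, S.mul x y = some z ∧ ∃ α ∈ l, S.le z α := by
  cases hmul : S.mul x y with
  | none => simp [deltaMul, hmul]
  | some z =>
      by_cases h : ∃ α ∈ l, S.le z α <;>
        simp [deltaMul, hmul, h] <;> rfl

theorem deltaMul_inl_inl_isSome {x y : T} :
    (S.deltaMul (Sum.inl x) (Sum.inl y)).isSome ↔ ∃ z, S.mul x y = some z := by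
  cases hmul : S.mul x y <;> simp [deltaMul, hmul] <;> rfl

theorem deltaMul_inl_shape {x : T} {b c : S.Delta}
    (h : S.deltaMul (Sum.inl x) b = some c) :
    ∃ y z, S.mul x y = some z ∧
      ((b = Sum.inl y ∧ c = Sum.inl z) ∨
        ∃ l hb hc, b = Sum.inr ⟨(y, l), hb⟩ ∧ c = Sum.inr ⟨(z, l), hc⟩) := by
  match b with
  | Sum.inl y =>
      replace h : (S.mul x y).map (Sum.inl : T → S.Delta) = some c := h
      replace h := Option.map_eq_some_iff.mp h
      obtain ⟨z, hz, rfl⟩ := h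
      exact ⟨y, z, hz, Or.inl ⟨rfl, rfl⟩⟩
  | Sum.inr ⟨(y, l), hp⟩ =>
      cases hmul : S.mul x y with
      | none => simp [deltaMul, hmul] at h
      | some z =>
          by_cases hle : ∃ α ∈ l, S.le z α
          · simp only [deltaMul, hmul, hle, dite_true] at h
            exact ⟨y, z, hmul, Or.inr ⟨l, hp, ⟨hp.1, hle⟩, rfl, (Option.some.inj h).symm⟩⟩
          · simp [deltaMul, hmul, hle] at h

theorem cancel_delta {a b b' c : S.Delta} (h : S.deltaMul a b = some c)
    (h' : S.deltaMul a b' = some c) : b = b' := by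
  match a with
  | Sum.inr _ => simp [deltaMul] at h
  | Sum.inl x =>
      obtain ⟨y, z, hyz, hc⟩ := S.deltaMul_inl_shape h
      obtain ⟨y', z', hyz', hc'⟩ := S.deltaMul_inl_shape h'
      rcases hc with ⟨rfl, rfl⟩ | ⟨l, hb, hcz, rfl, rfl⟩ <;>
        rcases hc' with ⟨rfl, hz'⟩ | ⟨l', hb', hcz', rfl, hz'⟩
      · obtain rfl := Sum.inl.inj hz'
        rw [S.cancel_T hyz hyz']
      · exact absurd hz' (by simp)
      · exact absurd hz' (by simp)
      · have hv : (⟨(z, l), hcz⟩ : S.DeltaMu) = ⟨(z', l'), hcz'⟩ := Sum.inr.inj hz'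
        have hpair : (z, l) = (z', l') := congrArg Subtype.val hv
        injection hpair with h1 h2
        subst h1; subst h2
        obtain rfl := S.cancel_T hyz hyz'
        exact congrArg Sum.inr (Subtype.ext rfl)

end Semigraph

section Hilb

variable {G : Type*}

local notation "H" => lp (fun _ : G => ℂ) 2

open scoped InnerProductSpace ComplexConjugate Classical

theorem deltaVec_apply (t t' : G) :
    (deltaVec t : ∀ _ : G, ℂ) t' = if t' = t then 1 else 0 := by
  classical
  simp [deltaVec, lp.single_apply, Pi.single_apply]

theorem deltaVec_ne_zero (t : G) : (deltaVec t : H) ≠ 0 := by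
  intro h
  have := congrArg (fun f : H => (f : ∀ _ : G, ℂ) t) h
  simp [deltaVec_apply] at this

theorem coord_eq_inner (f : H) (t : G) : (f : ∀ _ : G, ℂ) t = ⟪deltaVec t, f⟫_ℂ := by
  classical
  rw [deltaVec, lp.inner_single_left]
  simp

theorem inner_deltaVec_deltaVec (t t' : G) :
    ⟪deltaVec t, (deltaVec t' : H)⟫_ℂ = if t = t' then 1 else 0 := by
  rw [← coord_eq_inner, deltaVec_apply]

theorem clm_ext_delta {A B : H →L[ℂ] H}
    (h : ∀ t : G, A (deltaVec t) = B (deltaVec t)) : A = B := by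
  refine ContinuousLinearMap.ext fun f => ?_
  have hs := lp.hasSum_single (E := fun _ : G => ℂ) (p := 2) (by norm_num) f
  have hA := hs.mapL A
  have hB := hs.mapL B
  refine hA.unique ?_
  have heq : ∀ t : G, A (lp.single 2 t (f t)) = B (lp.single 2 t (f t)) := by
    intro t
    have hsm : (lp.single 2 t (f t) : H) = (f t : ℂ) • deltaVec t := by
      rw [deltaVec, ← lp.single_smul]
      norm_num
    rw [hsm, map_smul, map_smul, h]
  simpa only [heq] using hB

theorem Q_apply (m : G → G → Option G)
    (hcancel : ∀ a b b' c : G, m a b = some c → m a b' = some c → b = b')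
    (la : G → (H →L[ℂ] H)) (hla : IsLambdaFam m la) (a b : G) :
    (ContinuousLinearMap.adjoint (la a) * la a) (deltaVec b) =
      if (m a b).isSome then deltaVec b else 0 := by
  rw [ContinuousLinearMap.mul_apply, hla a b]
  cases hm : m a b with
  | none => simp [hm]
  | some c =>
      simp only [hm, Option.elim, Option.isSome_some, if_true]
      apply lp.ext
      funext t
      have h1 : (ContinuousLinearMap.adjoint (la a) (deltaVec c) : ∀ _ : G, ℂ) t
          = ⟪la a (deltaVec t), (deltaVec c : H)⟫_ℂ := by
        rw [coord_eq_inner, ContinuousLinearMap.adjoint_inner_right]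
      rw [hla a t] at h1
      rw [h1]
      cases hmt : m a t with
      | none =>
          simp only [hmt, Option.elim, inner_zero_left]
          have : t ≠ b := by rintro rfl; rw [hm] at hmt; cases hmt
          rw [deltaVec_apply, if_neg this]
      | some c' =>
          simp only [hmt, Option.elim]
          rw [inner_deltaVec_deltaVec, deltaVec_apply]
          by_cases hcc : c' = c
          · subst hcc
            have : t = b := hcancel a t b c' hmt hm
            simp [this]
          · have : t ≠ b := by rintro rfl; rw [hm] at hmt; exact hcc (Option.some.inj hmt).symm
            simp [hcc, this]

end Hilb


theorem prodQ_ofFn_apply {G : Type*} (m : G → G → Option G)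
    (hcancel : ∀ a b b' c : G, m a b = some c → m a b' = some c → b = b')
    (la : G → (lp (fun _ : G => ℂ) 2 →L[ℂ] lp (fun _ : G => ℂ) 2))
    (hla : IsLambdaFam m la) {n : ℕ} (f : Fin n → G) (b : G) :
    (List.ofFn fun i => ContinuousLinearMap.adjoint (la (f i)) * la (f i)).prod (deltaVec b) =
      if ∀ i, (m (f i) b).isSome then deltaVec b else 0 := by
  classical
  induction n with
  | zero => simp
  | succ n ih =>
      rw [List.ofFn_succ, List.prod_cons, ContinuousLinearMap.mul_apply,
        ih (fun i => f i.succ)]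
      by_cases hL : ∀ i : Fin n, (m (f i.succ) b).isSome
      · rw [if_pos hL, Q_apply m hcancel la hla]
        by_cases h0 : (m (f 0) b).isSome
        · rw [if_pos h0, if_pos]
          intro i
          refine Fin.cases h0 hL i
        · rw [if_neg h0, if_neg]
          intro hall; exact h0 (hall 0)
      · rw [if_neg hL, map_zero, if_neg]
        intro hall; exact hL fun i => hall i.succ


/-- if `p = Q_(α₁) ⋯ Q_(αₙ) ≠ 0` then all `αᵢ` have the same source,
the tuple `μ_α = (s(α₁), α₁, …, αₙ)` lies in `Δ_μ` with `p δ_(μ_α) = δ_(μ_α)`, and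
every projection `q = Q_(y₁) ⋯ Q_(y_l)` with `q ≤ p`, `q ≠ p` kills `δ_(μ_α)`. -/

theorem lambda_source_projection {k T : Type*} (S : Semigraph k T)
    (hidem : ∀ e : T, S.d e = 0 → S.mul e e = some e)
    (la : S.Delta → (lp (fun _ : S.Delta => ℂ) 2 →L[ℂ] lp (fun _ : S.Delta => ℂ) 2))
    (hla : IsLambdaFam S.deltaMul la)
    (src : T → T)
    (hsrc : ∀ x : T, S.d (src x) = 0 ∧ ∃ x' : T, S.mul x' (src x) = some x)
    (n : ℕ) (hn : 0 < n) (α : Fin n → T)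
    (hp : (List.ofFn fun i =>
        ContinuousLinearMap.adjoint (la (Sum.inl (α i))) * la (Sum.inl (α i))).prod ≠ 0) :
    (∀ i : Fin n, src (α i) = src (α ⟨0, hn⟩)) ∧
    ∃ hμ : (List.ofFn α ≠ [] ∧ ∃ a ∈ List.ofFn α, S.le (src (α ⟨0, hn⟩)) a),
      ((List.ofFn fun i =>
          ContinuousLinearMap.adjoint (la (Sum.inl (α i))) * la (Sum.inl (α i))).prod
        (deltaVec (Sum.inr ⟨(src (α ⟨0, hn⟩), List.ofFn α), hμ⟩ : S.Delta)) =
        deltaVec (Sum.inr ⟨(src (α ⟨0, hn⟩), List.ofFn α), hμ⟩ : S.Delta)) ∧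
      ∀ (l : ℕ) (y : Fin l → T),
        (List.ofFn fun j =>
            ContinuousLinearMap.adjoint (la (Sum.inl (y j))) * la (Sum.inl (y j))).prod *
          (List.ofFn fun i =>
            ContinuousLinearMap.adjoint (la (Sum.inl (α i))) * la (Sum.inl (α i))).prod =
          (List.ofFn fun j =>
            ContinuousLinearMap.adjoint (la (Sum.inl (y j))) * la (Sum.inl (y j))).prod →
        (List.ofFn fun j =>
            ContinuousLinearMap.adjoint (la (Sum.inl (y j))) * la (Sum.inl (y j))).prod ≠
          (List.ofFn fun i =>
            ContinuousLinearMap.adjoint (la (Sum.inl (α i))) * la (Sum.inl (α i))).prod →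
        (List.ofFn fun j =>
            ContinuousLinearMap.adjoint (la (Sum.inl (y j))) * la (Sum.inl (y j))).prod
          (deltaVec (Sum.inr ⟨(src (α ⟨0, hn⟩), List.ofFn α), hμ⟩ : S.Delta)) = 0 := by
    classical
  have hcancel : ∀ a b b' c : S.Delta,
      S.deltaMul a b = some c → S.deltaMul a b' = some c → b = b' :=
    fun _ _ _ _ h h' => S.cancel_delta h h'
  have hprod : ∀ {n' : ℕ} (f : Fin n' → T) (b : S.Delta),
      (List.ofFn fun i => ContinuousLinearMap.adjoint (la (Sum.inl (f i)))
        * la (Sum.inl (f i))).prod (deltaVec b) =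
        if ∀ i, (S.deltaMul (Sum.inl (f i)) b).isSome then deltaVec b else 0 :=
    fun f b => prodQ_ofFn_apply S.deltaMul hcancel la hla (fun i => Sum.inl (f i)) b
  -- Step 1: there is some b for which all products are defined
  have hex : ∃ b : S.Delta, ∀ i, (S.deltaMul (Sum.inl (α i)) b).isSome := by
    by_contra hc
    push_neg at hc
    apply hp
    refine clm_ext_delta (B := 0) fun t => ?_
    rw [hprod α t, ContinuousLinearMap.zero_apply, if_neg]
    intro hall
    obtain ⟨i, hi⟩ := hc t
    exact hi (hall i)
  obtain ⟨b, hb⟩ := hex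
  obtain ⟨v, hv⟩ : ∃ v : T, ∀ i, ∃ w, S.mul (α i) v = some w := by
    match b, hb with
    | Sum.inl v, hb =>
        refine ⟨v, fun i => ?_⟩
        have := hb i
        rwa [S.deltaMul_inl_inl_isSome] at this
    | Sum.inr ⟨(v, l), hpp⟩, hb =>
        refine ⟨v, fun i => ?_⟩
        have := hb i
        rw [S.deltaMul_inl_inr_isSome] at this
        obtain ⟨z, hz, -⟩ := this
        exact ⟨z, hz⟩
  -- Part (i)
  have hsrc_eq : ∀ i, src (α i) = src (α ⟨0, hn⟩) := by
    intro i
    obtain ⟨w, hw⟩ := hv i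
    obtain ⟨w0, hw0⟩ := hv ⟨0, hn⟩
    obtain ⟨hsd, x', hx'⟩ := hsrc (α i)
    obtain ⟨hsd0, x0', hx0'⟩ := hsrc (α ⟨0, hn⟩)
    exact S.unit_unique hsd hsd0 (S.unit_left hsd hx' hw) (S.unit_left hsd0 hx0' hw0)
  have hmulsrc : ∀ x : T, S.mul x (src x) = some x := fun x => by
    obtain ⟨hsd, x', hx'⟩ := hsrc x
    exact S.mul_unit_right (hidem _ hsd) hx'
  have hnenil : List.ofFn α ≠ [] := by
    simp only [ne_eq, List.ofFn_eq_nil_iff]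
    omega
  have hmem : ∀ i, α i ∈ List.ofFn α := fun i => by
    rw [List.mem_ofFn]; exact ⟨i, rfl⟩
  have hle0 : S.le (src (α ⟨0, hn⟩)) (α ⟨0, hn⟩) :=
    (S.le_def _ _).mpr ⟨α ⟨0, hn⟩, hmulsrc _⟩
  have hμ : List.ofFn α ≠ [] ∧ ∃ a ∈ List.ofFn α, S.le (src (α ⟨0, hn⟩)) a :=
    ⟨hnenil, α ⟨0, hn⟩, hmem _, hle0⟩
  refine ⟨hsrc_eq, hμ, ?_, ?_⟩
  -- Part (ii)
  · have hμdef : ∀ i, (S.deltaMul (Sum.inl (α i))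
        (Sum.inr ⟨(src (α ⟨0, hn⟩), List.ofFn α), hμ⟩ : S.Delta)).isSome := by
      intro i
      rw [S.deltaMul_inl_inr_isSome]
      refine ⟨α i, ?_, α i, hmem i, ?_⟩
      · rw [← hsrc_eq i]; exact hmulsrc (α i)
      · obtain ⟨e, -, het⟩ := S.le_self' hidem (α i)
        exact (S.le_def _ _).mpr ⟨e, het⟩
    exact (hprod α _).trans (if_pos hμdef)
  -- Part (iii)
  · intro l y hqp hne'
    refine (hprod y _).trans ?_
    by_cases hY : ∀ j, (S.deltaMul (Sum.inl (y j))
        (Sum.inr ⟨(src (α ⟨0, hn⟩), List.ofFn α), hμ⟩ : S.Delta)).isSome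
    · refine absurd ?_ hne'
      refine clm_ext_delta fun t => ?_
      refine (hprod y t).trans (Eq.trans ?_ (hprod α t).symm)
      have hiff : (∀ j, (S.deltaMul (Sum.inl (y j)) t).isSome) ↔
          (∀ i, (S.deltaMul (Sum.inl (α i)) t).isSome) := by
        constructor
        · -- Y ⊆ P via q * p = q
          intro hYt
          by_contra hallP
          have happ := congrArg
            (fun A : lp (fun _ : S.Delta => ℂ) 2 →L[ℂ] lp (fun _ : S.Delta => ℂ) 2 =>
              A (deltaVec t)) hqp
          simp only [ContinuousLinearMap.mul_apply] at happ
          rw [hprod α t, if_neg hallP, map_zero, hprod y t, if_pos hYt] at happ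
          exact deltaVec_ne_zero t happ.symm
        · -- P ⊆ Y via the source argument
          intro hPt j
          have hqj := hY j
          rw [S.deltaMul_inl_inr_isSome] at hqj
          obtain ⟨z, hz, am, ham, hlez⟩ := hqj
          obtain ⟨γ, hγ⟩ := (S.le_def _ _).mp hlez
          obtain ⟨m, rfl⟩ := List.mem_ofFn.mp ham
          cases t with
          | inl vv =>
              have h0 := hPt ⟨0, hn⟩
              rw [S.deltaMul_inl_inl_isSome] at h0
              obtain ⟨w0, hw0⟩ := h0
              have hm2 := hPt m
              rw [S.deltaMul_inl_inl_isSome] at hm2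
              obtain ⟨wm, hwm⟩ := hm2
              obtain ⟨hsd0, x0', hx0'⟩ := hsrc (α ⟨0, hn⟩)
              have hev := S.unit_left hsd0 hx0' hw0
              obtain ⟨u, hu, -⟩ := S.sub_mul_def hz hγ hwm hev
              rw [S.deltaMul_inl_inl_isSome]
              exact ⟨u, hu⟩
          | inr dmu =>
              obtain ⟨⟨vv, ll⟩, hpp⟩ := dmu
              have h0 := hPt ⟨0, hn⟩
              rw [S.deltaMul_inl_inr_isSome] at h0
              obtain ⟨w0, hw0, -⟩ := h0
              have hm2 := hPt m
              rw [S.deltaMul_inl_inr_isSome] at hm2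
              obtain ⟨wm, hwm, a, ha, hlew⟩ := hm2
              obtain ⟨γ', hγ'⟩ := (S.le_def _ _).mp hlew
              obtain ⟨hsd0, x0', hx0'⟩ := hsrc (α ⟨0, hn⟩)
              have hev := S.unit_left hsd0 hx0' hw0
              obtain ⟨u, hu, hγu⟩ := S.sub_mul_def hz hγ hwm hev
              have ha2 := S.toSemimultSet.assoc γ' γ u
              rw [hγu] at ha2
              simp only [Option.bind_some, hγ'] at ha2
              obtain ⟨η, hη, hηu⟩ := Option.bind_eq_some_iff.mp ha2
              rw [S.deltaMul_inl_inr_isSome]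
              exact ⟨u, hu, a, ha, (S.le_def _ _).mpr ⟨η, hηu⟩⟩
      simp only [hiff]
    · rw [if_neg hY]
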